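/- Let M be a multiplication R-module whose annihilator ann(M) is a prime ideal of R. Then M is meet irreducible: the intersection of any two nonzero submodules of M is nonzero. -/
import Mathlib


/-- A multiplication module whose annihilator is a prime ideal is meet
irreducible. -/
theorem multiplication_ann_prime_meet_irreducible
    {R M : Type*} [CommRing R] [AddCommGroup M] [Module R M] [Nontrivial M]
    (hmul : ∀ N : Submodule R M, N = (N.colon ⊤) • (⊤ : Submodule R M))
    (hp : ((⊥ : Submodule R M).colon ⊤).IsPrime) :
    ∀ K L : Submodule R M, K ≠ ⊥ → L ≠ ⊥ → K ⊓ L ≠ ⊥ := by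
  intro K L hK hL h
  set I := K.colon ⊤ with hI
  set J := L.colon ⊤ with hJ
  have hKrep : K = I • (⊤ : Submodule R M) := hmul K
  have hLrep : L = J • (⊤ : Submodule R M) := hmul L
  have hIJ : (I * J) • (⊤ : Submodule R M) ≤ K ⊓ L := by
    rw [mul_smul]
    apply le_inf
    · calc I • (J • (⊤ : Submodule R M)) ≤ I • ⊤ :=
            Submodule.smul_mono le_rfl le_top
        _ = K := hKrep.symm
    · calc I • (J • (⊤ : Submodule R M)) ≤ J • (⊤ : Submodule R M) :=
            Submodule.smul_le.2 fun r _ m hm => Submodule.smul_mem _ r hm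
        _ = L := hLrep.symm
  rw [h] at hIJ
  have hIJle : I * J ≤ (⊥ : Submodule R M).colon ⊤ := by
    intro r hr
    rw [Submodule.mem_colon]
    intro m hm
    exact hIJ (Submodule.smul_mem_smul hr (Submodule.mem_top))
  rcases hp.mul_le.1 hIJle with hle | hle
  · apply hK
    rw [hKrep]
    have : I • (⊤ : Submodule R M) ≤ ((⊥ : Submodule R M).colon ⊤) • ⊤ :=
      Submodule.smul_mono hle le_rfl
    refine le_bot_iff.1 (this.trans ?_)
    rw [Submodule.smul_le]
    intro r hr m hm
    exact (Submodule.mem_colon.1 hr) m hm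
  · apply hL
    rw [hLrep]
    have : J • (⊤ : Submodule R M) ≤ ((⊥ : Submodule R M).colon ⊤) • ⊤ :=
      Submodule.smul_mono hle le_rfl
    refine le_bot_iff.1 (this.trans ?_)
    rw [Submodule.smul_le]
    intro r hr m hm
    exact (Submodule.mem_colon.1 hr) m hm
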